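/- Sundman's inequality for N point masses: for positions r_i and velocities v_i in R³ with masses m_i > 0, the angular momentum H = Σ m_i (r_i × v_i), kinetic energy T = (1/2) Σ m_i |v_i|², and polar moment I_p = Σ m_i |r_i|² satisfy |H|² ≤ 2 I_p T. -/

import Mathlib

open RealInnerProductSpace

/-- The cross product of two vectors in Euclidean 3-space. -/
noncomputable def cross3 (a b : EuclideanSpace ℝ (Fin 3)) : EuclideanSpace ℝ (Fin 3) :=
  (WithLp.equiv 2 (Fin 3 → ℝ)).symm
    ![a 1 * b 2 - a 2 * b 1, a 2 * b 0 - a 0 * b 2, a 0 * b 1 - a 1 * b 0]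

lemma norm_sq_eq3 (x : EuclideanSpace ℝ (Fin 3)) : ‖x‖ ^ 2 = x 0 ^ 2 + x 1 ^ 2 + x 2 ^ 2 := by
  rw [EuclideanSpace.norm_eq, Real.sq_sqrt (by positivity)]
  simp [Fin.sum_univ_three, sq_abs]

lemma norm_cross_le (a b : EuclideanSpace ℝ (Fin 3)) : ‖cross3 a b‖ ≤ ‖a‖ * ‖b‖ := by
  have h : ‖cross3 a b‖ ^ 2 ≤ (‖a‖ * ‖b‖) ^ 2 := by
    have h1 := norm_sq_eq3 (cross3 a b)
    have h2 := norm_sq_eq3 a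
    have h3 := norm_sq_eq3 b
    simp only [cross3, WithLp.equiv_symm_apply, PiLp.toLp_apply] at h1
    simp only [Matrix.cons_val_zero, Matrix.cons_val_one, Matrix.head_cons,
      Matrix.cons_val_two, Matrix.tail_cons] at h1
    rw [show ‖cross3 a b‖ ^ 2 = _ from h1, mul_pow, h2, h3]
    nlinarith [sq_nonneg (a 0 * b 0 + a 1 * b 1 + a 2 * b 2)]
  calc ‖cross3 a b‖ = Real.sqrt (‖cross3 a b‖ ^ 2) := (Real.sqrt_sq (norm_nonneg _)).symm
    _ ≤ Real.sqrt ((‖a‖ * ‖b‖) ^ 2) := Real.sqrt_le_sqrt h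
    _ = ‖a‖ * ‖b‖ := Real.sqrt_sq (by positivity)

theorem sundman_inequality (N : ℕ) (m : Fin N → ℝ) (hm : ∀ i, 0 < m i)
    (r v : Fin N → EuclideanSpace ℝ (Fin 3)) :
    ‖∑ i, m i • cross3 (r i) (v i)‖ ^ 2 ≤
      2 * (∑ i, m i * ‖r i‖ ^ 2) * ((1 / 2) * ∑ i, m i * ‖v i‖ ^ 2) := by
  have key : ‖∑ i, m i • cross3 (r i) (v i)‖ ≤
      ∑ i, Real.sqrt (m i) * ‖r i‖ * (Real.sqrt (m i) * ‖v i‖) := by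
    refine (norm_sum_le _ _).trans (Finset.sum_le_sum fun i _ => ?_)
    rw [norm_smul, Real.norm_eq_abs, abs_of_pos (hm i)]
    have : Real.sqrt (m i) * ‖r i‖ * (Real.sqrt (m i) * ‖v i‖)
        = m i * (‖r i‖ * ‖v i‖) := by
      rw [show Real.sqrt (m i) * ‖r i‖ * (Real.sqrt (m i) * ‖v i‖)
          = Real.sqrt (m i) * Real.sqrt (m i) * (‖r i‖ * ‖v i‖) by ring,
        Real.mul_self_sqrt (hm i).le]
    rw [this]
    exact mul_le_mul_of_nonneg_left (norm_cross_le _ _) (hm i).le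
  have hsq : ∀ i, (Real.sqrt (m i) * ‖r i‖) ^ 2 = m i * ‖r i‖ ^ 2 := fun i => by
    rw [mul_pow, Real.sq_sqrt (hm i).le]
  have hsq' : ∀ i, (Real.sqrt (m i) * ‖v i‖) ^ 2 = m i * ‖v i‖ ^ 2 := fun i => by
    rw [mul_pow, Real.sq_sqrt (hm i).le]
  have hcs2 : (∑ i, Real.sqrt (m i) * ‖r i‖ * (Real.sqrt (m i) * ‖v i‖)) ^ 2 ≤
      (∑ i, m i * ‖r i‖ ^ 2) * (∑ i, m i * ‖v i‖ ^ 2) := by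
    have := Finset.sum_mul_sq_le_sq_mul_sq Finset.univ
      (fun i => Real.sqrt (m i) * ‖r i‖) (fun i => Real.sqrt (m i) * ‖v i‖)
    simpa [hsq, hsq'] using this
  have h0 : (0:ℝ) ≤ ∑ i, Real.sqrt (m i) * ‖r i‖ * (Real.sqrt (m i) * ‖v i‖) :=
    Finset.sum_nonneg fun i _ => by positivity
  calc ‖∑ i, m i • cross3 (r i) (v i)‖ ^ 2
      ≤ (∑ i, Real.sqrt (m i) * ‖r i‖ * (Real.sqrt (m i) * ‖v i‖)) ^ 2 :=
        pow_le_pow_left₀ (norm_nonneg _) key 2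
    _ ≤ (∑ i, m i * ‖r i‖ ^ 2) * (∑ i, m i * ‖v i‖ ^ 2) := hcs2
    _ = 2 * (∑ i, m i * ‖r i‖ ^ 2) * ((1 / 2) * ∑ i, m i * ‖v i‖ ^ 2) := by ring
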